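/- With H = V_K W_K and H^< = V_K Λ W_K as above, if rank(V_K) = rank(W_K) = m (full rank m, equal to the size of Λ), then rank(H) = m, and for any matrices V_0 ∈ ℂ^{Kk×m}, W_0 ∈ ℂ^{Kk×m}, Σ_0 ∈ ℂ^{m×m} with H = V_0 Σ_0 W_0ᴴ, V_0ᴴV_0 = I, W_0ᴴW_0 = I and Σ_0 invertible, the matrix A = V_0ᴴ H^< W_0 Σ_0^{-1} is similar to Λ; in particular A and Λ have the same eigenvalues. -/

import Mathlib

open Matrix

/-- Extraction step of the block SS algorithm: if `H = V_K W_K`, `H^< = V_K Λ W_K` with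
`rank V_K = rank W_K = m`, then `rank H = m`; and for any exact compact SVD-type
factorization `H = V_0 Σ_0 W_0ᴴ` with `V_0ᴴV_0 = I`, `W_0ᴴW_0 = I` and `Σ_0` invertible,
the matrix `A = V_0ᴴ H^< W_0 Σ_0⁻¹` is similar to `Λ`; in particular `A` and `Λ` have the
same eigenvalues. -/
theorem stmt_10 {k m K : ℕ}
    (VK : Matrix (Fin K × Fin k) (Fin m) ℂ) (WK : Matrix (Fin m) (Fin K × Fin k) ℂ)
    (Λ : Matrix (Fin m) (Fin m) ℂ)
    (H Hlt : Matrix (Fin K × Fin k) (Fin K × Fin k) ℂ)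
    (hH : H = VK * WK) (hHlt : Hlt = VK * Λ * WK)
    (hVK : VK.rank = m) (hWK : WK.rank = m)
    (V0 W0 : Matrix (Fin K × Fin k) (Fin m) ℂ) (Sig0 : Matrix (Fin m) (Fin m) ℂ)
    (hsvd : H = V0 * Sig0 * W0ᴴ) (hV0 : V0ᴴ * V0 = 1) (hW0 : W0ᴴ * W0 = 1)
    (hSig0 : IsUnit Sig0)
    (A : Matrix (Fin m) (Fin m) ℂ) (hA : A = V0ᴴ * Hlt * W0 * Sig0⁻¹) :
    H.rank = m ∧
      (∃ P : Matrix (Fin m) (Fin m) ℂ, IsUnit P ∧ A = P * Λ * P⁻¹) ∧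
      spectrum ℂ A = spectrum ℂ Λ := by
  have hSig0inv : Sig0 * Sig0⁻¹ = 1 :=
    Matrix.mul_nonsing_inv _ ((Matrix.isUnit_iff_isUnit_det _).mp hSig0)
  -- Σ0 = V0ᴴ * H * W0
  have hSigH : V0ᴴ * H * W0 = Sig0 := by
    rw [hsvd]
    calc V0ᴴ * (V0 * Sig0 * W0ᴴ) * W0 = (V0ᴴ * V0) * (Sig0 * (W0ᴴ * W0)) := by
          simp only [Matrix.mul_assoc]
      _ = Sig0 := by rw [hV0, hW0, Matrix.one_mul, Matrix.mul_one]
  -- rank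
  have hrank : H.rank = m := by
    have h1 : H.rank ≤ m := by
      rw [hH]; simpa [hVK] using Matrix.rank_mul_le_left VK WK
    have h2 : m ≤ H.rank := by
      have : Sig0.rank ≤ H.rank := by
        rw [← hSigH]
        exact le_trans (Matrix.rank_mul_le_left _ W0)
          (Matrix.rank_mul_le_right V0ᴴ H)
      simpa [Matrix.rank_of_isUnit Sig0 hSig0] using this
    omega
  -- similarity
  set P := V0ᴴ * VK with hP
  set Q := WK * W0 * Sig0⁻¹ with hQ
  have hPQ : P * Q = 1 := by
    have : P * Q = (V0ᴴ * H * W0) * Sig0⁻¹ := by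
      rw [hH]; simp only [hP, hQ, Matrix.mul_assoc]
    rw [this, hSigH, hSig0inv]
  have hPunit : IsUnit P :=
    (Matrix.isUnit_iff_isUnit_det _).mpr (Matrix.isUnit_det_of_right_inverse hPQ)
  have hPinv : P⁻¹ = Q := Matrix.inv_eq_right_inv hPQ
  have hAP : A = P * Λ * P⁻¹ := by
    rw [hPinv, hA, hHlt, hP, hQ]; simp only [Matrix.mul_assoc]
  refine ⟨hrank, ⟨P, hPunit, hAP⟩, ?_⟩
  obtain ⟨u, hu⟩ := hPunit
  rw [hAP, ← hu, ← Matrix.coe_units_inv]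
  exact spectrum.units_conjugate
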